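/- Every finite abelian group G of even order n has at least 2^{(n−2)/4} maximal distinct sum-free subsets. -/

import Mathlib

/-- `S` is distinct sum-free: it contains no triple of pairwise-distinct elements
`x, y, z` with `x + y = z`. -/
def IsDistSumFree {G : Type*} [AddCommGroup G] (S : Set G) : Prop :=
  ∀ x ∈ S, ∀ y ∈ S, ∀ z ∈ S, x ≠ y → x ≠ z → y ≠ z → x + y ≠ z

/-- `S` is a maximal distinct sum-free subset of `G`. -/
def IsMaxDistSumFree {G : Type*} [AddCommGroup G] (S : Set G) : Prop :=
  IsDistSumFree S ∧ ∀ T : Set G, IsDistSumFree T → S ⊆ T → S = T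

section Core
variable {G : Type*} [AddCommGroup G]

def rel (s x y : G) : Prop := y = x ∨ y = -x ∨ y = s + x ∨ y = s - x

lemma rel_refl (s x : G) : rel s x x := Or.inl rfl

lemma neg_s {s : G} (hs : s + s = 0) : -s = s := by
  rw [neg_eq_iff_add_eq_zero, hs]

lemma rel_symm {s : G} (hs : s + s = 0) {x y : G} (h : rel s x y) : rel s y x := by
  have hns := neg_s hs
  rcases h with rfl | rfl | rfl | rfl
  · exact Or.inl rfl
  · exact Or.inr (Or.inl (neg_neg x).symm)
  · refine Or.inr (Or.inr (Or.inl ?_)); rw [← add_assoc, hs, zero_add]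
  · refine Or.inr (Or.inr (Or.inr ?_)); abel

lemma rel_iff' {s x y : G} : rel s x y ↔
    ∃ ε : ℤ, ∃ δ : G, (ε = 1 ∨ ε = -1) ∧ (δ = 0 ∨ δ = s) ∧ y = δ + ε • x := by
  constructor
  · rintro (rfl | rfl | rfl | rfl)
    · exact ⟨1, 0, Or.inl rfl, Or.inl rfl, by simp⟩
    · exact ⟨-1, 0, Or.inr rfl, Or.inl rfl, by simp⟩
    · exact ⟨1, s, Or.inl rfl, Or.inr rfl, by simp⟩
    · exact ⟨-1, s, Or.inr rfl, Or.inr rfl, by simp [sub_eq_add_neg]⟩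
  · rintro ⟨ε, δ, (rfl | rfl), (rfl | rfl), rfl⟩
    · exact Or.inl (by simp)
    · exact Or.inr (Or.inr (Or.inl (by simp)))
    · exact Or.inr (Or.inl (by simp))
    · exact Or.inr (Or.inr (Or.inr (by simp [sub_eq_add_neg])))

lemma rel_trans {s : G} (hs : s + s = 0) {x y z : G} (h1 : rel s x y) (h2 : rel s y z) :
    rel s x z := by
  rw [rel_iff'] at *
  obtain ⟨ε₁, δ₁, hε₁, hδ₁, rfl⟩ := h1
  obtain ⟨ε₂, δ₂, hε₂, hδ₂, rfl⟩ := h2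
  refine ⟨ε₂ * ε₁, δ₂ + ε₂ • δ₁, ?_, ?_, ?_⟩
  · rcases hε₁ with rfl | rfl <;> rcases hε₂ with rfl | rfl <;> norm_num
  · rcases hδ₁ with rfl | rfl <;> rcases hδ₂ with rfl | rfl <;> rcases hε₂ with rfl | rfl <;>
      simp [hs, neg_s hs]
  · rw [smul_add, mul_smul, add_assoc]

lemma no_two_in_class (φ : G →+ ZMod 2) {s : G} (hφs : φ s = 0)
    {T : Set G} (hT : IsDistSumFree T) (h0 : (0:G) ∈ T) (hsT : s ∈ T)
    {a b : G} (ha : a ∈ T) (hb : b ∈ T) (hφa : φ a = 1) (hφb : φ b = 1)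
    (hab : a ≠ b) (hr : rel s a b) : False := by
  have h01 : (1 : ZMod 2) ≠ 0 := by decide
  have ha0 : a ≠ 0 := fun h => h01 (by rw [← hφa, h, map_zero])
  have has : a ≠ s := fun h => h01 (by rw [← hφa, h, hφs])
  rcases hr with rfl | rfl | rfl | rfl
  · exact hab rfl
  · have hb0 : -a ≠ 0 := fun h => h01 (by rw [← hφb, h, map_zero])
    exact (hT a ha (-a) hb 0 h0 hab ha0 hb0) (by abel)
  · have hbs : s + a ≠ s := fun h => h01 (by rw [← hφb, h, hφs])
    exact (hT s hsT a ha (s+a) hb (Ne.symm has) (Ne.symm hbs) hab) rfl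
  · have hbs : s - a ≠ s := fun h => h01 (by rw [← hφb, h, hφs])
    exact (hT a ha (s-a) hb s hsT hab has hbs) (by abel)

lemma rel_phi (φ : G →+ ZMod 2) {s : G} (hφs : φ s = 0) {x y : G}
    (hx : φ x = 1) (hr : rel s x y) : φ y = 1 := by
  have hneg : ∀ a : ZMod 2, -a = a := by decide
  rcases hr with rfl | rfl | rfl | rfl
  · exact hx
  · rw [map_neg, hx, hneg]
  · rw [map_add, hφs, hx, zero_add]
  · rw [map_sub, hφs, hx, zero_sub, hneg]

end Core

lemma exists_max_ext {G : Type*} [AddCommGroup G] [Finite G] (S : Set G) (hS : IsDistSumFree S) :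
    ∃ T, S ⊆ T ∧ IsMaxDistSumFree T := by
  have hfin : {T : Set G | IsDistSumFree T ∧ S ⊆ T}.Finite := Set.toFinite _
  obtain ⟨T, hT, hmax⟩ := hfin.exists_maximal ⟨S, hS, subset_rfl⟩
  exact ⟨T, hT.2, hT.1, fun T' hT' hsub => le_antisymm hsub (hmax ⟨hT', hT.2.trans hsub⟩ hsub)⟩

lemma numeric {ι : Type*} [Fintype ι] (m : ι → ℕ) (h1 : ∀ i, 1 ≤ m i) (h4 : ∀ i, m i ≤ 4)
    (huniq : ∀ i j, m i = 1 → m j = 1 → i = j) :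
    2 ^ (∑ i, m i - 1) ≤ (∏ i, m i) ^ 2 := by
  classical
  have key : ∀ i, m i ≠ 1 → 2 ^ (m i) ≤ (m i)^2 := by
    intro i hi
    have hh1 := h1 i; have hh4 := h4 i
    interval_cases h : m i <;> omega
  rw [← Finset.prod_pow]
  by_cases hex : ∃ i₀, m i₀ = 1
  · obtain ⟨i₀, hi₀⟩ := hex
    have h2 : 2 ^ (∑ i ∈ Finset.univ.erase i₀, m i) ≤ ∏ i ∈ Finset.univ.erase i₀, (m i)^2 := by
      rw [← Finset.prod_pow_eq_pow_sum]
      refine Finset.prod_le_prod' ?_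
      intro i hi
      exact key i (fun h => (Finset.mem_erase.mp hi).1 (huniq i i₀ h hi₀))
    have hsum : ∑ i, m i = 1 + ∑ i ∈ Finset.univ.erase i₀, m i := by
      rw [← hi₀, Finset.add_sum_erase _ m (Finset.mem_univ i₀)]
    calc 2 ^ (∑ i, m i - 1) = 2 ^ (∑ i ∈ Finset.univ.erase i₀, m i) := by
          rw [hsum]; congr 1; omega
      _ ≤ ∏ i ∈ Finset.univ.erase i₀, (m i)^2 := h2
      _ ≤ ∏ i, (m i)^2 := by
          refine Finset.prod_le_prod_of_subset_of_one_le' (Finset.subset_univ _) ?_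
          intro i _ _
          exact Nat.one_le_pow _ _ (h1 i)
  · push_neg at hex
    calc 2 ^ (∑ i, m i - 1) ≤ 2 ^ (∑ i, m i) := Nat.pow_le_pow_right (by norm_num) (Nat.sub_le _ _)
      _ = ∏ i, 2 ^ (m i) := (Finset.prod_pow_eq_pow_sum _ _ _).symm
      _ ≤ ∏ i, (m i)^2 := Finset.prod_le_prod' (fun i _ => key i (hex i))

lemma main_bound {G : Type*} [AddCommGroup G] [Fintype G] (φ : G →+ ZMod 2) (s : G)
    (hs : s + s = 0) (hφs : φ s = 0)
    (hsmax : s = 0 → ∀ t : G, φ t = 0 → t + t = 0 → t = 0) :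
    2 ^ (Nat.card {x : G // φ x = 1} - 1) ≤ (Nat.card {S : Set G // IsMaxDistSumFree S}) ^ 2 := by
  classical
  letI st : Setoid {x : G // φ x = 1} :=
    ⟨fun a b => rel s ↑a ↑b,
      ⟨fun a => rel_refl s ↑a, fun h => rel_symm hs h, fun h h' => rel_trans hs h h'⟩⟩
  let Q := Quotient st
  let Fib : Q → Type _ := fun q => {a : {x : G // φ x = 1} // Quotient.mk st a = q}
  let m : Q → ℕ := fun q => Nat.card (Fib q)
  -- sum of fibers
  have hsum : ∑ q : Q, m q = Nat.card {x : G // φ x = 1} := by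
    calc ∑ q : Q, m q = Nat.card (Σ q : Q, Fib q) := by
          rw [Nat.card_eq_fintype_card, Fintype.card_sigma]
          simp [m, Nat.card_eq_fintype_card]
      _ = Nat.card {x : G // φ x = 1} :=
          Nat.card_congr (Equiv.sigmaFiberEquiv (fun a : {x : G // φ x = 1} => Quotient.mk st a))
  -- fiber bounds
  have hm1 : ∀ q, 1 ≤ m q := by
    intro q
    obtain ⟨a, ha⟩ := Quotient.exists_rep q
    have : Nonempty (Fib q) := ⟨⟨a, ha⟩⟩
    exact Nat.card_pos
  have hm4 : ∀ q, m q ≤ 4 := by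
    intro q
    obtain ⟨a, ha⟩ := Quotient.exists_rep q
    have hmem : ∀ b : Fib q,
        ((b.1 : G) : G) ∈ ({(a : G), -(a:G), s + (a:G), s - (a:G)} : Set G) := by
      intro b
      have : Quotient.mk st b.1 = Quotient.mk st a := by rw [b.2, ha]
      have hr : rel s (a : G) ((b.1 : G) : G) := Quotient.exact this |> rel_symm hs
      simpa [Set.mem_insert_iff, rel] using hr
    have hinj : Nat.card (Fib q) ≤ Nat.card ({(a : G), -(a:G), s + (a:G), s - (a:G)} : Set G) := by
      refine Nat.card_le_card_of_injective (fun b => ⟨(b.1 : G), hmem b⟩) ?_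
      intro b b' hbb
      simp only [Subtype.mk.injEq] at hbb
      exact Subtype.ext (Subtype.ext hbb)
    refine hinj.trans ?_
    rw [Nat.card_coe_set_eq]
    refine (Set.ncard_insert_le _ _).trans ?_
    have h2 := Set.ncard_insert_le (-(a:G)) ({s + (a:G), s - (a:G)} : Set G)
    have h3 := Set.ncard_insert_le (s + (a:G)) ({s - (a:G)} : Set G)
    have h4 : ({s - (a:G)} : Set G).ncard = 1 := Set.ncard_singleton _
    omega
  have hmk : ∀ (a : {x : G // φ x = 1}) (y : G) (hy : φ y = 1), rel s (a:G) y →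
      Quotient.mk st (⟨y, hy⟩ : {x : G // φ x = 1}) = Quotient.mk st a := by
    intro a y hy hr
    exact Quotient.sound (rel_symm hs hr)
  have huniq : ∀ q q', m q = 1 → m q' = 1 → q = q' := by
    intro q q' hq hq'
    obtain ⟨hsub, -⟩ := Nat.card_eq_one_iff_unique.mp hq
    obtain ⟨hsub', -⟩ := Nat.card_eq_one_iff_unique.mp hq'
    obtain ⟨a, ha⟩ := Quotient.exists_rep q
    obtain ⟨a', ha'⟩ := Quotient.exists_rep q'
    have step : ∀ (c : {x : G // φ x = 1}) (r : Q), Quotient.mk st c = r →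
        (∀ (u v : Fib r), u = v) → ((c:G) + (c:G) = 0 ∧ s = 0) := by
      intro c r hc hss
      have hnegmem : φ (-(c:G)) = 1 := rel_phi φ hφs c.2 (Or.inr (Or.inl rfl))
      have haddmem : φ (s + (c:G)) = 1 := rel_phi φ hφs c.2 (Or.inr (Or.inr (Or.inl rfl)))
      have e1 : (⟨⟨-(c:G), hnegmem⟩, by rw [hmk c _ hnegmem (Or.inr (Or.inl rfl)), hc]⟩ : Fib r)
          = ⟨c, hc⟩ := hss _ _
      have e2 : (⟨⟨s + (c:G), haddmem⟩, by
          rw [hmk c _ haddmem (Or.inr (Or.inr (Or.inl rfl))), hc]⟩ : Fib r) = ⟨c, hc⟩ := hss _ _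
      have e1' : -(c:G) = (c:G) := congrArg (fun x => ((x.1 : G) : G)) e1
      have e2' : s + (c:G) = (c:G) := congrArg (fun x => ((x.1 : G) : G)) e2
      constructor
      · have h := congrArg (fun z => (c:G) + z) e1'
        simp only [add_neg_cancel] at h
        exact h.symm
      · have h : s = (c:G) - (c:G) := eq_sub_of_add_eq e2'
        simpa using h
    have h1 := step a q ha (fun u v => @Subsingleton.elim _ hsub u v)
    have h2 := step a' q' ha' (fun u v => @Subsingleton.elim _ hsub' u v)
    have hzero := h1.2
    have ht : (a:G) - (a':G) = 0 := by
      refine hsmax hzero _ ?_ ?_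
      · rw [map_sub, a.2, a'.2, sub_self]
      · have := h1.1; have := h2.1
        have : ((a:G) - (a':G)) + ((a:G) - (a':G)) = ((a:G) + (a:G)) - ((a':G) + (a':G)) := by abel
        rw [this, h1.1, h2.1, sub_zero]
    have : (a:G) = (a':G) := by rwa [sub_eq_zero] at ht
    have : a = a' := Subtype.ext this
    rw [← ha, ← ha', this]
  -- numeric bound
  have hnum := numeric m hm1 hm4 huniq
  rw [hsum] at hnum
  -- transversals
  let Tr := {t : Q → {x : G // φ x = 1} // ∀ q, Quotient.mk st (t q) = q}
  have hTr : Nat.card Tr = ∏ q, m q := by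
    rw [Nat.card_congr (Equiv.subtypePiEquivPi (p := fun q a => Quotient.mk st a = q)), Nat.card_pi]
  -- the sum-free sets
  let Sf : Tr → Set G := fun t => insert 0 (insert s (Set.range fun q => ((t.1 q : {x : G // φ x = 1}) : G)))
  have hphi : ∀ (t : Tr) (q : Q), φ ((t.1 q : {x : G // φ x = 1}) : G) = 1 := fun t q => (t.1 q).2
  have hsame : ∀ (t : Tr) (q q' : Q), rel s ((t.1 q : {x : G // φ x = 1}) : G) ((t.1 q' : {x : G // φ x = 1}) : G) →
      ((t.1 q : {x : G // φ x = 1}) : G) = ((t.1 q' : {x : G // φ x = 1}) : G) := by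
    intro t q q' hr
    have : q = q' := by rw [← t.2 q, ← t.2 q']; exact Quotient.sound hr
    rw [this]
  have hDSF : ∀ t : Tr, IsDistSumFree (Sf t) := by
    intro t
    have hφv : ∀ q : Q, φ ((t.1 q : {x : G // φ x = 1}) : G) = 1 := fun q => (t.1 q).2
    intro x hx y hy z hz hxy hxz hyz hsum'
    have h10 : (1 : ZMod 2) ≠ 0 := by decide
    simp only [Sf, Set.mem_insert_iff, Set.mem_range] at hx hy hz
    rcases hx with rfl | hx' | ⟨qx, rfl⟩
    · -- x = 0
      rcases hy with rfl | hy' | ⟨qy, rfl⟩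
      · exact hxy rfl
      · replace hy' := hy'.symm; subst hy'
        rcases hz with rfl | hz' | ⟨qz, rfl⟩
        · exact hxz rfl
        · replace hz' := hz'.symm; subst hz'
          exact hyz rfl
        · rw [zero_add] at hsum'
          exact h10 (by rw [← hφv qz, ← hsum']; exact hφs)
      · rw [zero_add] at hsum'
        rcases hz with rfl | hz' | ⟨qz, rfl⟩
        · exact h10 (by rw [← hφv qy, hsum', map_zero])
        · replace hz' := hz'.symm; subst hz'
          exact hyz hsum'
        · exact hyz hsum'
    · -- x = s
      replace hx' := hx'.symm; subst hx'
      rcases hy with rfl | hy' | ⟨qy, rfl⟩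
      · rw [add_zero] at hsum'
        rcases hz with rfl | hz' | ⟨qz, rfl⟩
        · exact hyz rfl
        · replace hz' := hz'.symm; subst hz'
          exact hxz rfl
        · exact h10 (by rw [← hφv qz, ← hsum']; exact hφs)
      · replace hy' := hy'.symm; subst hy'
        exact hxy rfl
      · rcases hz with rfl | hz' | ⟨qz, rfl⟩
        · have hφe := congrArg φ hsum'
          rw [map_add, hφs, hφv qy, map_zero, zero_add] at hφe
          exact h10 hφe
        · replace hz' := hz'.symm; subst hz'
          rw [add_eq_left] at hsum'
          exact h10 (by rw [← hφv qy, hsum', map_zero])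
        · exact hyz (hsame t qy qz (Or.inr (Or.inr (Or.inl hsum'.symm))))
    · -- x = v qx
      rcases hy with rfl | hy' | ⟨qy, rfl⟩
      · rw [add_zero] at hsum'
        rcases hz with rfl | hz' | ⟨qz, rfl⟩
        · exact h10 (by rw [← hφv qx, hsum', map_zero])
        · replace hz' := hz'.symm; subst hz'
          exact hxz hsum'
        · exact hxz hsum'
      · replace hy' := hy'.symm; subst hy'
        rcases hz with rfl | hz' | ⟨qz, rfl⟩
        · have hφe := congrArg φ hsum'
          rw [map_add, hφs, hφv qx, map_zero, add_zero] at hφe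
          exact h10 hφe
        · replace hz' := hz'.symm; subst hz'
          rw [add_eq_right] at hsum'
          exact h10 (by rw [← hφv qx, hsum', map_zero])
        · exact hxz (hsame t qx qz (Or.inr (Or.inr (Or.inl (by rw [← hsum']; exact add_comm _ _)))))
      · rcases hz with rfl | hz' | ⟨qz, rfl⟩
        · exact hxy (hsame t qx qy (Or.inr (Or.inl (by rw [eq_neg_iff_add_eq_zero, add_comm]; exact hsum'))))
        · replace hz' := hz'.symm; subst hz'
          exact hxy (hsame t qx qy (Or.inr (Or.inr (Or.inr (by rw [eq_sub_iff_add_eq, add_comm]; exact hsum')))))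
        · have hφe := congrArg φ hsum'
          rw [map_add, hφv qx, hφv qy, hφv qz] at hφe
          exact absurd hφe (by decide)
  -- maximal extensions
  let F : Tr → {S : Set G // IsMaxDistSumFree S} := fun t =>
    ⟨(exists_max_ext _ (hDSF t)).choose, (exists_max_ext _ (hDSF t)).choose_spec.2⟩
  have hFsub : ∀ t : Tr, Sf t ⊆ (F t).1 := fun t => (exists_max_ext _ (hDSF t)).choose_spec.1
  have hFinj : Function.Injective F := by
    intro t u h
    refine Subtype.ext (funext fun q => ?_)
    by_contra hne
    have hab : ((t.1 q : {x : G // φ x = 1}) : G) ≠ ((u.1 q : {x : G // φ x = 1}) : G) :=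
      fun he => hne (Subtype.ext he)
    have hr : rel s ((t.1 q : {x : G // φ x = 1}) : G) ((u.1 q : {x : G // φ x = 1}) : G) := by
      have : Quotient.mk st (t.1 q) = Quotient.mk st (u.1 q) := by rw [t.2 q, u.2 q]
      exact Quotient.exact this
    have hT := (F t).2.1
    have h0T : (0 : G) ∈ (F t).1 := hFsub t (Set.mem_insert _ _)
    have hsT : s ∈ (F t).1 := hFsub t (Set.mem_insert_of_mem _ (Set.mem_insert _ _))
    have haT : ((t.1 q : {x : G // φ x = 1}) : G) ∈ (F t).1 :=
      hFsub t (Set.mem_insert_of_mem _ (Set.mem_insert_of_mem _ ⟨q, rfl⟩))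
    have hbT : ((u.1 q : {x : G // φ x = 1}) : G) ∈ (F t).1 := by
      rw [h]
      exact hFsub u (Set.mem_insert_of_mem _ (Set.mem_insert_of_mem _ ⟨q, rfl⟩))
    exact no_two_in_class φ hφs hT h0T hsT haT hbT (hphi t q) (hphi u q) hab hr
  have hle : Nat.card Tr ≤ Nat.card {S : Set G // IsMaxDistSumFree S} :=
    Nat.card_le_card_of_injective F hFinj
  calc 2 ^ (Nat.card {x : G // φ x = 1} - 1) ≤ (∏ q, m q) ^ 2 := hnum
    _ = (Nat.card Tr) ^ 2 := by rw [hTr]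
    _ ≤ (Nat.card {S : Set G // IsMaxDistSumFree S}) ^ 2 := Nat.pow_le_pow_left hle 2


lemma exists_hom (G : Type*) [AddCommGroup G] [Fintype G] (heven : Even (Fintype.card G)) :
    ∃ (φ : G →+ ZMod 2) (a₀ : G), φ a₀ = 1 := by
  obtain ⟨t, ht⟩ := exists_prime_addOrderOf_dvd_card (G := G) 2 heven.two_dvd
  have ht0 : t ≠ 0 := by
    intro h; rw [h] at ht; simp at ht
  have ht2 : 2 • t = 0 := by
    rw [← ht]; exact addOrderOf_nsmul_eq_zero t
  set d : G →+ G := 2 • AddMonoidHom.id G with hd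
  have hdx : ∀ x : G, d x = 2 • x := fun x => rfl
  set N := d.range with hN
  have hmem : ∀ x : G, 2 • x ∈ N := fun x => ⟨x, rfl⟩
  letI : Module (ZMod 2) (G ⧸ N) := QuotientAddGroup.zmodModule hmem
  have hdninj : ¬ Function.Injective d := by
    intro h
    exact ht0 (h (by simp [hdx, ht2]))
  have hdnsurj : ¬ Function.Surjective d := by
    intro h
    exact hdninj (Finite.injective_iff_surjective.mpr h)
  obtain ⟨x, hx⟩ : ∃ x : G, x ∉ N := by
    by_contra h
    push_neg at h
    exact hdnsurj fun y => (h y)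
  set v : G ⧸ N := QuotientAddGroup.mk x with hv
  have hv0 : v ≠ 0 := by
    rw [hv]
    intro h
    exact hx ((QuotientAddGroup.eq_zero_iff x).mp h)
  set l : ZMod 2 →ₗ[ZMod 2] (G ⧸ N) := LinearMap.toSpanSingleton (ZMod 2) (G ⧸ N) v with hl
  have hker : LinearMap.ker l = ⊥ := by
    rw [LinearMap.ker_eq_bot']
    intro c hc
    have hall : ∀ c' : ZMod 2, c' = 0 ∨ c' = 1 := by decide
    have hc01 := hall c
    rcases hc01 with rfl | rfl
    · rfl
    · exfalso; apply hv0; simpa [hl, LinearMap.toSpanSingleton_apply] using hc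
  obtain ⟨g, hg⟩ := l.exists_leftInverse_of_injective hker
  refine ⟨g.toAddMonoidHom.comp (QuotientAddGroup.mk' N), x, ?_⟩
  have : g v = 1 := by
    have := congrArg (fun f => f (1 : ZMod 2)) (congrArg DFunLike.coe hg)
    simpa [hl, LinearMap.toSpanSingleton_apply] using this
  simpa using this


lemma two_mul_cardA {G : Type*} [AddCommGroup G] [Fintype G] (φ : G →+ ZMod 2) (a₀ : G)
    (ha₀ : φ a₀ = 1) : 2 * Nat.card {x : G // φ x = 1} = Fintype.card G := by
  classical
  have hone : ∀ a : ZMod 2, ¬ a = 1 → a = 0 := by decide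
  have e : {x : G // φ x = 1} ≃ {x : G // ¬ φ x = 1} :=
    { toFun := fun x => ⟨(x : G) + a₀, by rw [map_add, x.2, ha₀]; decide⟩
      invFun := fun y => ⟨(y : G) - a₀, by rw [map_sub, hone _ y.2, ha₀]; decide⟩
      left_inv := fun x => Subtype.ext (by simp)
      right_inv := fun y => Subtype.ext (by simp) }
  have h1 : Nat.card {x : G // φ x = 1} = Fintype.card {x : G // φ x = 1} :=
    Nat.card_eq_fintype_card
  have h2 : Fintype.card {x : G // φ x = 1} = Fintype.card {x : G // ¬ φ x = 1} :=
    Fintype.card_congr e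
  have h3 : Fintype.card {x : G // ¬ φ x = 1} =
      Fintype.card G - Fintype.card {x : G // φ x = 1} := Fintype.card_subtype_compl _
  have h4 : Fintype.card {x : G // φ x = 1} ≤ Fintype.card G := Fintype.card_subtype_le _
  omega


/-- every finite abelian group of even order `n` has at least
`2^{(n-2)/4}` maximal distinct sum-free subsets. -/
theorem stmt15 (G : Type*) [AddCommGroup G] [Fintype G]
    (heven : Even (Fintype.card G)) :
    (2 : ℝ) ^ (((Fintype.card G : ℝ) - 2) / 4) ≤
      Nat.card {S : Set G // IsMaxDistSumFree S} := by
  classical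
  obtain ⟨φ, a₀, ha₀⟩ := exists_hom G heven
  obtain ⟨s, hs, hφs, hsmax⟩ :
      ∃ s : G, s + s = 0 ∧ φ s = 0 ∧ (s = 0 → ∀ t : G, φ t = 0 → t + t = 0 → t = 0) := by
    by_cases hex : ∃ t : G, t ≠ 0 ∧ φ t = 0 ∧ t + t = 0
    · obtain ⟨t, ht0, htφ, ht2⟩ := hex
      exact ⟨t, ht2, htφ, fun h => absurd h ht0⟩
    · push_neg at hex
      refine ⟨0, by simp, by simp, fun _ t hφt ht2 => ?_⟩
      by_contra h0
      exact (hex t h0 hφt) ht2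
  have hnat := main_bound φ s hs hφs hsmax
  have h2c := two_mul_cardA φ a₀ ha₀
  set cA := Nat.card {x : G // φ x = 1} with hcA
  set N := Nat.card {S : Set G // IsMaxDistSumFree S} with hN
  have hcA1 : 1 ≤ cA := by
    have : Nonempty {x : G // φ x = 1} := ⟨⟨a₀, ha₀⟩⟩
    exact Nat.card_pos
  -- real arithmetic
  set x : ℝ := (2 : ℝ) ^ (((Fintype.card G : ℝ) - 2) / 4) with hx
  have hx0 : 0 ≤ x := Real.rpow_nonneg (by norm_num) _
  have hN0 : (0:ℝ) ≤ (N : ℝ) := Nat.cast_nonneg _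
  have hxsq : x ^ 2 = (2 : ℝ) ^ ((cA : ℝ) - 1) := by
    rw [hx, ← Real.rpow_natCast ((2:ℝ) ^ (((Fintype.card G : ℝ) - 2) / 4)) 2,
      ← Real.rpow_mul (by norm_num)]
    congr 1
    have : (Fintype.card G : ℝ) = 2 * (cA : ℝ) := by
      rw [← h2c]; push_cast; ring
    rw [this]; push_cast; ring
  have hrhs : (2 : ℝ) ^ ((cA : ℝ) - 1) = ((2 ^ (cA - 1) : ℕ) : ℝ) := by
    have : ((cA : ℝ) - 1) = ((cA - 1 : ℕ) : ℝ) := by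
      have := hcA1; push_cast [Nat.cast_sub this]; ring
    rw [this, Real.rpow_natCast]; push_cast; ring
  have hle : x ^ 2 ≤ (N : ℝ) ^ 2 := by
    rw [hxsq, hrhs]
    calc ((2 ^ (cA - 1) : ℕ) : ℝ) ≤ ((N ^ 2 : ℕ) : ℝ) := Nat.cast_le.mpr hnat
      _ = (N : ℝ) ^ 2 := by push_cast; ring
  calc x = Real.sqrt (x ^ 2) := by rw [Real.sqrt_sq hx0]
    _ ≤ Real.sqrt ((N : ℝ) ^ 2) := Real.sqrt_le_sqrt hle
    _ = (N : ℝ) := by rw [Real.sqrt_sq hN0]
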